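/- (Explicit splitting vectors) Let k ≥ 1 and q ≥ 1 with n = k + q, and let τ_{i,j} denote the operator on H^{⊗n} swapping the i-th and j-th tensor components. Then for every b ∈ H_{k,q}: (i) v⁺ := (1/(k+1)) Σ_{l=1}^{k+1} τ_{l,k+1} b belongs to H^{⊙[k+1],∧[q−1]}, and (ii) v⁻ := (1/(q+1)) (b − Σ_{m=k+1}^{n} τ_{k,m} b) belongs to H^{⊙[k−1],∧[q+1]}; moreover each τ_{l,k+1} b (1 ≤ l ≤ k+1) and each τ_{k,m} b (k+1 ≤ m ≤ n) belongs to H^{⊙[k],∧[q]}. -/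

import Mathlib

set_option linter.unusedSectionVars false


open scoped BigOperators

noncomputable section

variable (F : Type*) [Field F] [CharZero F] (H : Type*) [AddCommGroup H] [Module F H]

/-- The `n`-th tensor power of `H` over `F`. -/
abbrev TP (n : ℕ) : Type _ := PiTensorProduct F (fun _ : Fin n => H)

/-- The action of a permutation `σ ∈ S_n` on the `n`-th tensor power,
permuting the tensor factors. -/
def permMap (n : ℕ) (σ : Equiv.Perm (Fin n)) : TP F H n →ₗ[F] TP F H n :=
  (PiTensorProduct.reindex F (fun _ : Fin n => H) σ).toLinearMap

/-- Identification of tensor powers of equal degrees. -/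
def tpCast {m m' : ℕ} (hm : m = m') : TP F H m →ₗ[F] TP F H m' :=
  (PiTensorProduct.reindex F (fun _ : Fin m => H) (finCongr hm)).toLinearMap

/-- The permutations of `{1, …, n}` moving only positions in `a`. -/
def permsOn (n : ℕ) (a : Finset (Fin n)) : Finset (Equiv.Perm (Fin n)) :=
  Finset.univ.filter fun σ => ∀ i, i ∉ a → σ i = i

/-- `S_a`: symmetrisation over the positions in `a` (the average over all
permutations of the positions in `a`, fixing the other positions). -/
def symOn (n : ℕ) (a : Finset (Fin n)) : TP F H n →ₗ[F] TP F H n :=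
  (a.card.factorial : F)⁻¹ • ∑ σ ∈ permsOn n a, permMap F H n σ

/-- `A_a`: skew-symmetrisation over the positions in `a` (the signed average over
all permutations of the positions in `a`, fixing the other positions). -/
def altOn (n : ℕ) (a : Finset (Fin n)) : TP F H n →ₗ[F] TP F H n :=
  (a.card.factorial : F)⁻¹ • ∑ σ ∈ permsOn n a, (Equiv.Perm.sign σ : ℤ) • permMap F H n σ

/-- The first `k` positions of `{1, …, n}`. -/
def firstSet (n k : ℕ) : Finset (Fin n) := Finset.univ.filter fun i => (i : ℕ) < k

/-- The last `m` positions of `{1, …, n}`. -/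
def lastSet (n m : ℕ) : Finset (Fin n) := Finset.univ.filter fun i => n - m ≤ (i : ℕ)

/-- `H^{⊙a,∧aᶜ}`: the image of `S_a ∘ A_{aᶜ}`, the subspace of `n`-tensors symmetric in
the positions of `a` and skew-symmetric in the positions of `aᶜ`. -/
def Hgen (n : ℕ) (a : Finset (Fin n)) : Submodule F (TP F H n) :=
  LinearMap.range (symOn F H n a ∘ₗ altOn F H n aᶜ)

/-- `H_{k,n-k} = H^{⊙k} ⊗ H^{∧(n-k)}`: the subspace of `n`-tensors symmetric in the
first `k` positions and skew-symmetric in the remaining positions. -/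
def Hmix (n k : ℕ) : Submodule F (TP F H n) := Hgen F H n (firstSet n k)

/-- `H^{⊙[k],∧[n-k]}`: the span of the subspaces `H^{⊙a,∧aᶜ}` over all `k`-element
subsets `a ⊆ {1, …, n}`. -/
def HmixSpan (n k : ℕ) : Submodule F (TP F H n) :=
  ⨆ a ∈ {a : Finset (Fin n) | a.card = k}, Hgen F H n a

/-- The global operator whose restriction to `H_{k,q}` (with `m = q + 1`, `n = k + q`)
is `d̆_q`: skew-symmetrisation of the last `m` positions, scaled by `m`. -/
def dOp (n m : ℕ) : TP F H n →ₗ[F] TP F H n := (m : F) • altOn F H n (lastSet n m)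

/-- The global operator whose restriction to `H_{k-1,q+1}` (with `m = k`, `n = k + q`)
is `d̆*_q`: symmetrisation of the first `m` positions, scaled by `m`. -/
def dStarOp (n m : ℕ) : TP F H n →ₗ[F] TP F H n := (m : F) • symOn F H n (firstSet n m)

/-- The elementary element `h₁⊙…⊙h_k ⊗ x₁∧…∧x_q` of `H_{k,q} ⊆ H^{⊗(k+q)}`. -/
def elem (k q : ℕ) (h : Fin k → H) (x : Fin q → H) : TP F H (k + q) :=
  ∑ ρ : Equiv.Perm (Fin k), ∑ τ : Equiv.Perm (Fin q),
    (Equiv.Perm.sign τ : ℤ) •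
      (PiTensorProduct.tprod F (Fin.append (h ∘ ρ) (x ∘ τ)) : TP F H (k + q))

lemma permMap_mul (n : ℕ) (σ τ : Equiv.Perm (Fin n)) :
    permMap F H n (σ * τ) = permMap F H n σ ∘ₗ permMap F H n τ := by
  unfold permMap
  rw [show (σ * τ : Equiv.Perm (Fin n)) = τ.trans σ from rfl,
    ← PiTensorProduct.reindex_trans τ σ]
  rfl

lemma permMap_one (n : ℕ) : permMap F H n 1 = LinearMap.id := by
  unfold permMap
  rw [show (1 : Equiv.Perm (Fin n)) = Equiv.refl (Fin n) from rfl,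
    PiTensorProduct.reindex_refl]
  rfl

lemma mem_permsOn {n : ℕ} {a : Finset (Fin n)} {σ : Equiv.Perm (Fin n)} :
    σ ∈ permsOn n a ↔ ∀ i, i ∉ a → σ i = i := by
  simp [permsOn]

lemma one_mem_permsOn {n : ℕ} {a : Finset (Fin n)} : 1 ∈ permsOn n a :=
  mem_permsOn.2 fun _ _ => rfl

lemma mul_mem_permsOn {n : ℕ} {a : Finset (Fin n)} {σ τ : Equiv.Perm (Fin n)}
    (hσ : σ ∈ permsOn n a) (hτ : τ ∈ permsOn n a) : σ * τ ∈ permsOn n a := by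
  rw [mem_permsOn] at *
  intro i hi
  simp [hτ i hi, hσ i hi, Equiv.Perm.mul_apply]

lemma inv_mem_permsOn {n : ℕ} {a : Finset (Fin n)} {σ : Equiv.Perm (Fin n)}
    (hσ : σ ∈ permsOn n a) : σ⁻¹ ∈ permsOn n a := by
  rw [mem_permsOn] at *
  intro i hi
  conv_lhs => rw [← hσ i hi]
  simp

lemma card_permsOn (n : ℕ) (a : Finset (Fin n)) :
    (permsOn n a).card = a.card.factorial := by
  classical
  have himg : permsOn n a =
      (Finset.univ : Finset (Equiv.Perm {x : Fin n // x ∈ a})).image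
        (Equiv.Perm.ofSubtype) := by
    ext σ
    simp only [Finset.mem_image, Finset.mem_univ, true_and]
    constructor
    · intro hσ
      rw [mem_permsOn] at hσ
      have hmap : ∀ x : Fin n, x ∈ a ↔ σ x ∈ a := by
        intro x
        constructor
        · intro hx
          by_contra hsx
          have := hσ _ hsx
          have : σ x = x := σ.injective (by rw [this])
          rw [this] at hsx; exact hsx hx
        · intro hsx
          by_contra hx
          have := hσ _ hx
          rw [this] at hsx; exact hx hsx
      refine ⟨σ.subtypePerm (fun x => (hmap x).symm), ?_⟩
      ext x
      by_cases hx : x ∈ a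
      · rw [Equiv.Perm.ofSubtype_apply_of_mem _ hx]; rfl
      · rw [Equiv.Perm.ofSubtype_apply_of_not_mem _ hx, hσ _ hx]
    · rintro ⟨τ, rfl⟩
      rw [mem_permsOn]
      intro i hi
      exact Equiv.Perm.ofSubtype_apply_of_not_mem _ hi
  rw [himg, Finset.card_image_of_injective _ ?_, Finset.card_univ,
    Fintype.card_perm, Fintype.card_coe]
  intro σ τ h
  ext x
  have h2 := congrArg (· (x : Fin n)) h
  beta_reduce at h2
  rw [Equiv.Perm.ofSubtype_apply_of_mem σ x.2, Equiv.Perm.ofSubtype_apply_of_mem τ x.2] at h2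
  have h3 : σ ⟨(x : Fin n), x.2⟩ = τ ⟨(x : Fin n), x.2⟩ := Subtype.ext h2
  have h4 := congrArg (fun y : {x : Fin n // x ∈ a} => ((y : Fin n) : ℕ)) h3
  simpa using h4

lemma sum_permsOn_insert {M : Type*} [AddCommMonoid M] (n : ℕ) (a : Finset (Fin n))
    (p : Fin n) (hp : p ∉ a) (f : Equiv.Perm (Fin n) → M) :
    ∑ σ ∈ permsOn n (insert p a), f σ =
      ∑ l ∈ insert p a, ∑ π ∈ permsOn n a, f (Equiv.swap l p * π) := by
  classical
  rw [← Finset.sum_product']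
  refine Finset.sum_nbij' (i := fun σ => (σ p, Equiv.swap (σ p) p * σ))
    (j := fun lπ => Equiv.swap lπ.1 p * lπ.2) ?_ ?_ ?_ ?_ ?_
  · intro σ hσ
    rw [mem_permsOn] at hσ
    have hσp : σ p ∈ insert p a := by
      by_contra h
      have h1 := hσ _ h
      have : σ p = p := σ.injective (by rw [h1])
      rw [this] at h; exact h (Finset.mem_insert_self p a)
    rw [Finset.mem_product]
    refine ⟨hσp, ?_⟩
    rw [mem_permsOn]
    intro i hi
    by_cases hip : i = p
    · subst hip; simp [Equiv.Perm.mul_apply]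
    · have : i ∉ insert p a := by simp [hi, hip]
      have h1 := hσ _ this
      simp only [Equiv.Perm.mul_apply, h1]
      refine Equiv.swap_apply_of_ne_of_ne ?_ hip
      intro h
      rw [h] at this
      exact this hσp
  · rintro ⟨l, π⟩ h
    rw [Finset.mem_product] at h
    obtain ⟨hl, hπ⟩ := h
    rw [mem_permsOn] at hπ ⊢
    intro i hi
    have hia : i ∉ a := fun h => hi (Finset.mem_insert_of_mem h)
    have hip : i ≠ p := fun h => hi (h ▸ Finset.mem_insert_self p a)
    have hil : i ≠ l := fun h => hi (h ▸ hl)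
    simp only [Equiv.Perm.mul_apply, hπ i hia]
    exact Equiv.swap_apply_of_ne_of_ne hil hip
  · intro σ _
    simp only
    rw [← mul_assoc, Equiv.swap_mul_self, one_mul]
  · rintro ⟨l, π⟩ h
    rw [Finset.mem_product] at h
    obtain ⟨hl, hπ⟩ := h
    rw [mem_permsOn] at hπ
    have hπp : π p = p := hπ p hp
    have h1 : (Equiv.swap l p * π) p = l := by
      simp [Equiv.Perm.mul_apply, hπp]
    rw [Prod.ext_iff]
    refine ⟨h1, ?_⟩
    simp only [h1]
    rw [← mul_assoc, Equiv.swap_mul_self, one_mul]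
  · intro σ _
    simp only
    congr 1
    rw [← mul_assoc, Equiv.swap_mul_self, one_mul]


-- map of a finset under a permutation
lemma map_perm_compl {n : ℕ} (a : Finset (Fin n)) (σ : Equiv.Perm (Fin n)) :
    (a.map σ.toEmbedding)ᶜ = aᶜ.map σ.toEmbedding := by
  ext i
  simp [Finset.mem_map_equiv]

lemma map_perm_self {n : ℕ} (a : Finset (Fin n)) (σ : Equiv.Perm (Fin n))
    (h : ∀ i ∈ a, σ i = i) : a.map σ.toEmbedding = a := by
  ext i
  rw [Finset.mem_map_equiv]
  constructor
  · intro hi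
    have h2 := h _ hi
    rw [Equiv.apply_symm_apply] at h2
    rwa [h2]
  · intro hi
    have h2 : σ.symm i = i := by
      conv_lhs => rw [← h i hi]
      exact σ.symm_apply_apply i
    rwa [h2]

lemma mem_permsOn_map {n : ℕ} {a : Finset (Fin n)} {σ π : Equiv.Perm (Fin n)}
    (hπ : π ∈ permsOn n a) : σ * π * σ⁻¹ ∈ permsOn n (a.map σ.toEmbedding) := by
  rw [mem_permsOn] at hπ ⊢
  intro i hi
  rw [Finset.mem_map_equiv] at hi
  have h1 : π (σ.symm i) = σ.symm i := hπ _ hi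
  simp [Equiv.Perm.mul_apply, Equiv.Perm.inv_def, h1]

-- pointwise conjugation for symOn
lemma permMap_symOn_conj (n : ℕ) (a : Finset (Fin n)) (σ : Equiv.Perm (Fin n)) (x : TP F H n) :
    permMap F H n σ (symOn F H n a x) =
      symOn F H n (a.map σ.toEmbedding) (permMap F H n σ x) := by
  classical
  simp only [symOn, Finset.card_map, LinearMap.smul_apply, LinearMap.sum_apply, map_smul,
    map_sum]
  congr 1
  have key : ∀ π ∈ permsOn n a,
      permMap F H n σ (permMap F H n π x) = permMap F H n (σ * π * σ⁻¹) (permMap F H n σ x) := by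
    intro π _
    rw [← LinearMap.comp_apply, ← permMap_mul, ← LinearMap.comp_apply, ← permMap_mul]
    congr 2
    group
  rw [Finset.sum_congr rfl key]
  refine Finset.sum_nbij' (i := fun π => σ * π * σ⁻¹) (j := fun ρ => σ⁻¹ * ρ * σ) ?_ ?_ ?_ ?_ ?_
  · intro π hπ; exact mem_permsOn_map hπ
  · intro ρ hρ
    have := mem_permsOn_map (σ := σ⁻¹) hρ
    rwa [show (a.map σ.toEmbedding).map σ⁻¹.toEmbedding = a from ?_] at this
    ext i
    simp [Finset.mem_map_equiv, Equiv.Perm.inv_def]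
  · intro π _; group
  · intro ρ _; group
  · intro π _; rfl

lemma permMap_altOn_conj (n : ℕ) (a : Finset (Fin n)) (σ : Equiv.Perm (Fin n)) (x : TP F H n) :
    permMap F H n σ (altOn F H n a x) =
      altOn F H n (a.map σ.toEmbedding) (permMap F H n σ x) := by
  classical
  simp only [altOn, Finset.card_map, LinearMap.smul_apply, LinearMap.sum_apply, map_smul,
    map_sum, map_zsmul]
  have hz : ∀ (z : ℤ) (f : TP F H n →ₗ[F] TP F H n) y, (z • f) y = z • f y := fun z f y => rfl
  simp only [hz, map_zsmul]
  congr 1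
  have key : ∀ π ∈ permsOn n a,
      (Equiv.Perm.sign π : ℤ) • permMap F H n σ (permMap F H n π x) =
        (Equiv.Perm.sign (σ * π * σ⁻¹) : ℤ) • permMap F H n (σ * π * σ⁻¹) (permMap F H n σ x) := by
    intro π _
    rw [show Equiv.Perm.sign (σ * π * σ⁻¹) = Equiv.Perm.sign π by
      rcases Int.units_eq_one_or (Equiv.Perm.sign σ) with h | h <;>
        simp [Equiv.Perm.sign_mul, Equiv.Perm.sign_inv, h]]
    congr 1
    rw [← LinearMap.comp_apply, ← permMap_mul, ← LinearMap.comp_apply, ← permMap_mul]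
    congr 2
    group
  rw [Finset.sum_congr rfl key]
  refine Finset.sum_nbij' (i := fun π => σ * π * σ⁻¹) (j := fun ρ => σ⁻¹ * ρ * σ) ?_ ?_ ?_ ?_ ?_
  · intro π hπ; exact mem_permsOn_map hπ
  · intro ρ hρ
    have := mem_permsOn_map (σ := σ⁻¹) hρ
    rwa [show (a.map σ.toEmbedding).map σ⁻¹.toEmbedding = a from ?_] at this
    ext i
    simp [Finset.mem_map_equiv, Equiv.Perm.inv_def]
  · intro π _; group
  · intro ρ _; group
  · intro π _; rfl

-- invariance of images
lemma permMap_symOn_eq (n : ℕ) (a : Finset (Fin n)) (σ : Equiv.Perm (Fin n))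
    (hσ : σ ∈ permsOn n a) (x : TP F H n) :
    permMap F H n σ (symOn F H n a x) = symOn F H n a x := by
  classical
  simp only [symOn, LinearMap.smul_apply, LinearMap.sum_apply, map_smul, map_sum]
  congr 1
  have key : ∀ π ∈ permsOn n a,
      permMap F H n σ (permMap F H n π x) = permMap F H n (σ * π) x := by
    intro π _
    rw [permMap_mul]; rfl
  rw [Finset.sum_congr rfl key]
  refine Finset.sum_nbij' (i := fun π => σ * π) (j := fun ρ => σ⁻¹ * ρ) ?_ ?_ ?_ ?_ ?_
  · intro π hπ; exact mul_mem_permsOn hσ hπ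
  · intro ρ hρ; exact mul_mem_permsOn (inv_mem_permsOn hσ) hρ
  · intro π _; group
  · intro ρ _; group
  · intro π _; rfl

lemma permMap_altOn_eq (n : ℕ) (a : Finset (Fin n)) (σ : Equiv.Perm (Fin n))
    (hσ : σ ∈ permsOn n a) (x : TP F H n) :
    permMap F H n σ (altOn F H n a x) = (Equiv.Perm.sign σ : ℤ) • altOn F H n a x := by
  classical
  have key : ∑ π ∈ permsOn n a, (Equiv.Perm.sign π : ℤ) • permMap F H n σ (permMap F H n π x)
      = ∑ ρ ∈ permsOn n a,
          ((Equiv.Perm.sign σ : ℤ) * (Equiv.Perm.sign ρ : ℤ)) • permMap F H n ρ x := by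
    refine Finset.sum_nbij' (i := fun π => σ * π) (j := fun ρ => σ⁻¹ * ρ) ?_ ?_ ?_ ?_ ?_
    · intro π hπ; exact mul_mem_permsOn hσ hπ
    · intro ρ hρ; exact mul_mem_permsOn (inv_mem_permsOn hσ) hρ
    · intro π _; group
    · intro ρ _; group
    · intro π _
      rw [← LinearMap.comp_apply, ← permMap_mul]
      rw [show ((Equiv.Perm.sign σ : ℤ) * (Equiv.Perm.sign (σ * π) : ℤ))
          = (Equiv.Perm.sign π : ℤ) by
        rcases Int.units_eq_one_or (Equiv.Perm.sign σ) with h | h <;>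
          simp [Equiv.Perm.sign_mul, h]]
  have expand : permMap F H n σ (altOn F H n a x)
      = (a.card.factorial : F)⁻¹ • ∑ π ∈ permsOn n a,
          (Equiv.Perm.sign π : ℤ) • permMap F H n σ (permMap F H n π x) := by
    have hz : ∀ (z : ℤ) (f : TP F H n →ₗ[F] TP F H n) y, (z • f) y = z • f y := fun z f y => rfl
    simp only [altOn, LinearMap.smul_apply, LinearMap.sum_apply, map_smul, map_sum, map_zsmul]
    simp only [hz, map_zsmul]
  rw [expand, key]
  simp only [altOn, LinearMap.smul_apply, LinearMap.sum_apply]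
  have hz : ∀ (z : ℤ) (f : TP F H n →ₗ[F] TP F H n) y, (z • f) y = z • f y := fun z f y => rfl
  simp only [hz]
  simp only [← Int.cast_smul_eq_zsmul F, Finset.smul_sum, smul_smul]
  refine Finset.sum_congr rfl fun ρ _ => ?_
  congr 1
  push_cast
  ring

lemma permsOn_mono {n : ℕ} {a b : Finset (Fin n)} (h : a ⊆ b) : permsOn n a ⊆ permsOn n b := by
  intro σ hσ
  rw [mem_permsOn] at *
  exact fun i hi => hσ i (fun hia => hi (h hia))

lemma factorial_cast_ne (m : ℕ) : ((m.factorial : F)) ≠ 0 := by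
  exact_mod_cast Nat.cast_ne_zero.2 m.factorial_ne_zero

lemma symOn_apply_fixed (n : ℕ) (a : Finset (Fin n)) (x : TP F H n)
    (hx : ∀ σ ∈ permsOn n a, permMap F H n σ x = x) :
    symOn F H n a x = x := by
  simp only [symOn, LinearMap.smul_apply, LinearMap.sum_apply]
  rw [Finset.sum_congr rfl hx, Finset.sum_const, card_permsOn,
    ← Nat.cast_smul_eq_nsmul F, smul_smul, inv_mul_cancel₀ (factorial_cast_ne F a.card), one_smul]

lemma altOn_apply_fixed (n : ℕ) (a : Finset (Fin n)) (x : TP F H n)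
    (hx : ∀ σ ∈ permsOn n a, permMap F H n σ x = (Equiv.Perm.sign σ : ℤ) • x) :
    altOn F H n a x = x := by
  simp only [altOn, LinearMap.smul_apply, LinearMap.sum_apply]
  have hz : ∀ (z : ℤ) (f : TP F H n →ₗ[F] TP F H n) y, (z • f) y = z • f y := fun z f y => rfl
  simp only [hz]
  have : ∀ σ ∈ permsOn n a,
      (Equiv.Perm.sign σ : ℤ) • permMap F H n σ x = x := by
    intro σ hσ
    rw [hx σ hσ, smul_smul]
    rcases Int.units_eq_one_or (Equiv.Perm.sign σ) with h | h <;> simp [h]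
  rw [Finset.sum_congr rfl this, Finset.sum_const, card_permsOn,
    ← Nat.cast_smul_eq_nsmul F, smul_smul, inv_mul_cancel₀ (factorial_cast_ne F a.card), one_smul]

lemma symOn_insert_apply (n : ℕ) (a : Finset (Fin n)) (p : Fin n) (hp : p ∉ a) (x : TP F H n)
    (hx : ∀ σ ∈ permsOn n a, permMap F H n σ x = x) :
    symOn F H n (insert p a) x =
      ((a.card : F) + 1)⁻¹ • ∑ l ∈ insert p a, permMap F H n (Equiv.swap l p) x := by
  simp only [symOn, LinearMap.smul_apply, LinearMap.sum_apply,
    Finset.card_insert_of_notMem hp]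
  rw [sum_permsOn_insert n a p hp (fun σ => permMap F H n σ x)]
  have inner : ∀ l ∈ insert p a, ∑ π ∈ permsOn n a, permMap F H n (Equiv.swap l p * π) x
      = (a.card.factorial : F) • permMap F H n (Equiv.swap l p) x := by
    intro l _
    have : ∀ π ∈ permsOn n a, permMap F H n (Equiv.swap l p * π) x
        = permMap F H n (Equiv.swap l p) x := by
      intro π hπ
      rw [permMap_mul, LinearMap.comp_apply, hx π hπ]
    rw [Finset.sum_congr rfl this, Finset.sum_const, card_permsOn,
      ← Nat.cast_smul_eq_nsmul F]
  rw [Finset.sum_congr rfl inner, ← Finset.smul_sum, smul_smul]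
  congr 1
  rw [Nat.factorial_succ]
  push_cast
  have h1 : ((a.card : F) + 1) ≠ 0 := by
    have h2 : (((a.card + 1 : ℕ)) : F) ≠ 0 := Nat.cast_ne_zero.2 (Nat.succ_ne_zero _)
    push_cast at h2
    exact h2
  have h3 := factorial_cast_ne F a.card
  field_simp

lemma altOn_insert_apply (n : ℕ) (a : Finset (Fin n)) (p : Fin n) (hp : p ∉ a) (x : TP F H n)
    (hx : ∀ σ ∈ permsOn n a, permMap F H n σ x = (Equiv.Perm.sign σ : ℤ) • x) :
    altOn F H n (insert p a) x =
      ((a.card : F) + 1)⁻¹ • (x - ∑ l ∈ a, permMap F H n (Equiv.swap l p) x) := by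
  simp only [altOn, LinearMap.smul_apply, LinearMap.sum_apply,
    Finset.card_insert_of_notMem hp]
  have hz : ∀ (z : ℤ) (f : TP F H n →ₗ[F] TP F H n) y, (z • f) y = z • f y := fun z f y => rfl
  simp only [hz]
  rw [sum_permsOn_insert n a p hp (fun σ => (Equiv.Perm.sign σ : ℤ) • permMap F H n σ x)]
  have inner : ∀ l ∈ insert p a,
      ∑ π ∈ permsOn n a, (Equiv.Perm.sign (Equiv.swap l p * π) : ℤ) •
          permMap F H n (Equiv.swap l p * π) x
      = (a.card.factorial : F) •
          ((Equiv.Perm.sign (Equiv.swap l p) : ℤ) • permMap F H n (Equiv.swap l p) x) := by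
    intro l _
    have : ∀ π ∈ permsOn n a, (Equiv.Perm.sign (Equiv.swap l p * π) : ℤ) •
          permMap F H n (Equiv.swap l p * π) x
        = (Equiv.Perm.sign (Equiv.swap l p) : ℤ) • permMap F H n (Equiv.swap l p) x := by
      intro π hπ
      rw [permMap_mul, LinearMap.comp_apply, hx π hπ, map_zsmul, smul_smul]
      congr 1
      rw [Equiv.Perm.sign_mul]
      push_cast
      rcases Int.units_eq_one_or (Equiv.Perm.sign π) with h | h <;> simp [h]
    rw [Finset.sum_congr rfl this, Finset.sum_const, card_permsOn,
      ← Nat.cast_smul_eq_nsmul F]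
  rw [Finset.sum_congr rfl inner, ← Finset.smul_sum, smul_smul, Finset.sum_insert hp]
  have hpp : (Equiv.Perm.sign (Equiv.swap p p) : ℤ) • permMap F H n (Equiv.swap p p) x = x := by
    rw [Equiv.swap_self]
    simp [show (Equiv.refl (Fin n) : Equiv.Perm (Fin n)) = 1 from rfl, permMap_one]
  rw [hpp]
  have hneg : ∀ l ∈ a, (Equiv.Perm.sign (Equiv.swap l p) : ℤ) •
      permMap F H n (Equiv.swap l p) x = -(permMap F H n (Equiv.swap l p) x) := by
    intro l hl
    have hlp : l ≠ p := fun h => hp (h ▸ hl)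
    rw [Equiv.Perm.sign_swap hlp]
    simp
  rw [Finset.sum_congr rfl hneg, Finset.sum_neg_distrib]
  rw [← sub_eq_add_neg]
  congr 1
  rw [Nat.factorial_succ]
  push_cast
  have h1 : ((a.card : F) + 1) ≠ 0 := by
    have h2 : (((a.card + 1 : ℕ)) : F) ≠ 0 := Nat.cast_ne_zero.2 (Nat.succ_ne_zero _)
    push_cast at h2
    exact h2
  have h3 := factorial_cast_ne F a.card
  field_simp

lemma mem_firstSet {n k : ℕ} {i : Fin n} : i ∈ firstSet n k ↔ (i : ℕ) < k := by
  simp [firstSet]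

lemma mem_lastSet {n m : ℕ} {i : Fin n} : i ∈ lastSet n m ↔ n - m ≤ (i : ℕ) := by
  simp [lastSet]

lemma firstSet_eq_map {n k : ℕ} (h : k ≤ n) :
    firstSet n k = Finset.univ.map (Fin.castLEEmb h) := by
  ext i
  simp only [mem_firstSet, Finset.mem_map, Finset.mem_univ, true_and]
  constructor
  · intro hi; exact ⟨⟨i, hi⟩, rfl⟩
  · rintro ⟨j, rfl⟩; exact j.isLt

lemma firstSet_card {n k : ℕ} (h : k ≤ n) : (firstSet n k).card = k := by
  rw [firstSet_eq_map h, Finset.card_map, Finset.card_univ, Fintype.card_fin]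

def lastEmb (n m : ℕ) (h : m ≤ n) : Fin m ↪ Fin n :=
  ⟨fun j => ⟨n - m + j, by omega⟩, fun a b hab => by
    have := congrArg Fin.val hab
    simp only at this
    exact Fin.ext (by omega)⟩

lemma lastSet_eq_map {n m : ℕ} (h : m ≤ n) :
    lastSet n m = Finset.univ.map (lastEmb n m h) := by
  ext i
  simp only [mem_lastSet, Finset.mem_map, Finset.mem_univ, true_and, lastEmb,
    Function.Embedding.coeFn_mk]
  constructor
  · intro hi
    refine ⟨⟨(i : ℕ) - (n - m), by omega⟩, Fin.ext ?_⟩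
    show n - m + ((i : ℕ) - (n - m)) = i
    omega
  · rintro ⟨j, rfl⟩
    show n - m ≤ n - m + (j : ℕ)
    omega

lemma lastSet_card {n m : ℕ} (h : m ≤ n) : (lastSet n m).card = m := by
  rw [lastSet_eq_map h, Finset.card_map, Finset.card_univ, Fintype.card_fin]

lemma compl_firstSet {n k : ℕ} : (firstSet n k)ᶜ = lastSet n (n - k) := by
  ext i
  simp only [Finset.mem_compl, mem_firstSet, mem_lastSet]
  have := i.isLt
  omega

lemma firstSet_insert {n k : ℕ} (h : k < n) :
    firstSet n (k + 1) = insert ⟨k, h⟩ (firstSet n k) := by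
  ext i
  simp only [mem_firstSet, Finset.mem_insert, Fin.ext_iff]
  omega

lemma lastSet_insert {n q : ℕ} (h : q < n) :
    lastSet n (q + 1) = insert ⟨n - (q + 1), by omega⟩ (lastSet n q) := by
  ext i
  simp only [mem_lastSet, Finset.mem_insert, Fin.ext_iff]
  have := i.isLt
  omega

lemma firstSet_mono {n : ℕ} {k k' : ℕ} (h : k ≤ k') : firstSet n k ⊆ firstSet n k' := by
  intro i hi
  rw [mem_firstSet] at *
  omega

lemma lastSet_mono {n : ℕ} {m m' : ℕ} (h : m ≤ m') : lastSet n m ⊆ lastSet n m' := by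
  intro i hi
  rw [mem_lastSet] at *
  omega

lemma mem_HmixSpan {n k : ℕ} (a : Finset (Fin n)) (ha : a.card = k) {v : TP F H n}
    (hv : v ∈ Hgen F H n a) : v ∈ HmixSpan F H n k := by
  have hle : Hgen F H n a ≤ HmixSpan F H n k :=
    le_iSup₂ (f := fun (a : Finset (Fin n)) (_ : a ∈ {a : Finset (Fin n) | a.card = k}) =>
      Hgen F H n a) a ha
  exact hle hv

lemma Hgen_perm {n : ℕ} (a : Finset (Fin n)) (σ : Equiv.Perm (Fin n)) {b : TP F H n}
    (hb : b ∈ Hgen F H n a) :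
    permMap F H n σ b ∈ Hgen F H n (a.map σ.toEmbedding) := by
  obtain ⟨c, hc⟩ := hb
  refine ⟨permMap F H n σ c, ?_⟩
  rw [LinearMap.comp_apply] at hc ⊢
  rw [map_perm_compl, ← permMap_altOn_conj, ← permMap_symOn_conj, hc]

lemma Hmix_perm_sym {k q : ℕ} {b : TP F H (k + q)} (hb : b ∈ Hmix F H (k + q) k) :
    ∀ σ ∈ permsOn (k + q) (firstSet (k + q) k), permMap F H (k + q) σ b = b := by
  obtain ⟨c, hc⟩ := hb
  rw [LinearMap.comp_apply] at hc
  intro σ hσ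
  rw [← hc]
  exact permMap_symOn_eq F H _ _ σ hσ _

lemma Hmix_perm_alt {k q : ℕ} {b : TP F H (k + q)} (hb : b ∈ Hmix F H (k + q) k) :
    ∀ σ ∈ permsOn (k + q) (lastSet (k + q) q),
      permMap F H (k + q) σ b = (Equiv.Perm.sign σ : ℤ) • b := by
  obtain ⟨c, hc⟩ := hb
  rw [LinearMap.comp_apply] at hc
  intro σ hσ
  have hcompl : (firstSet (k + q) k)ᶜ = lastSet (k + q) q := by
    rw [compl_firstSet]
    congr 1
    omega
  have hfix : ∀ i ∈ firstSet (k + q) k, σ i = i := by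
    intro i hi
    rw [mem_firstSet] at hi
    refine mem_permsOn.1 hσ i ?_
    rw [mem_lastSet]
    omega
  rw [← hc, permMap_symOn_conj, map_perm_self _ σ hfix, hcompl,
    permMap_altOn_eq F H _ _ σ hσ, map_zsmul]

set_option maxHeartbeats 1000000 in
/-- Explicit splitting vectors: for `k ≥ 1`, `q ≥ 1` with `n = k + q`,
writing `τ_{i,j}` for the transposition of the `i`-th and `j`-th tensor components
(1-indexed in the informal statement, 0-indexed below), for every `b ∈ H_{k,q}`:
(i) `v⁺ = (1/(k+1)) Σ_{l=1}^{k+1} τ_{l,k+1} b ∈ H^{⊙[k+1],∧[q-1]}`;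
(ii) `v⁻ = (1/(q+1)) (b − Σ_{m=k+1}^{n} τ_{k,m} b) ∈ H^{⊙[k-1],∧[q+1]}`;
moreover each `τ_{l,k+1} b` and each `τ_{k,m} b` belongs to `H^{⊙[k],∧[q]}`. -/
theorem splitting_vectors (k q : ℕ) (hk : 1 ≤ k) (hq : 1 ≤ q) :
    ∀ b ∈ Hmix F H (k + q) k,
      (((k : F) + 1)⁻¹ •
          ∑ l : Fin (k + 1),
            permMap F H (k + q)
              (Equiv.swap ⟨(l : ℕ), by have := l.isLt; omega⟩ ⟨k, by omega⟩) b ∈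
        HmixSpan F H (k + q) (k + 1)) ∧
      (((q : F) + 1)⁻¹ •
          (b - ∑ m : Fin q,
            permMap F H (k + q)
              (Equiv.swap ⟨k - 1, by omega⟩ ⟨k + (m : ℕ), by have := m.isLt; omega⟩) b) ∈
        HmixSpan F H (k + q) (k - 1)) ∧
      (∀ l : Fin (k + 1),
        permMap F H (k + q)
            (Equiv.swap ⟨(l : ℕ), by have := l.isLt; omega⟩ ⟨k, by omega⟩) b ∈
          HmixSpan F H (k + q) k) ∧
      (∀ m : Fin q,
        permMap F H (k + q)
            (Equiv.swap ⟨k - 1, by omega⟩ ⟨k + (m : ℕ), by have := m.isLt; omega⟩) b ∈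
          HmixSpan F H (k + q) k) := by
  intro b hb
  have hA := Hmix_perm_sym F H hb
  have hB := Hmix_perm_alt F H hb
  have hkn : k ≤ k + q := by omega
  have hkn1 : k + 1 ≤ k + q := by omega
  have hqn : q ≤ k + q := by omega
  refine ⟨?_, ?_, ?_, ?_⟩
  · -- (i)
    have hp : (⟨k, by omega⟩ : Fin (k + q)) ∉ firstSet (k + q) k := by
      simp [mem_firstSet]
    have h1 := symOn_insert_apply F H (k + q) (firstSet (k + q) k) ⟨k, by omega⟩ hp b hA
    rw [firstSet_card hkn, ← firstSet_insert (show k < k + q by omega)] at h1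
    have hsum : ∑ l ∈ firstSet (k + q) (k + 1),
        permMap F H (k + q) (Equiv.swap l ⟨k, by omega⟩) b
        = ∑ l : Fin (k + 1),
            permMap F H (k + q)
              (Equiv.swap ⟨(l : ℕ), by have := l.isLt; omega⟩ ⟨k, by omega⟩) b := by
      rw [firstSet_eq_map hkn1, Finset.sum_map]
      refine Finset.sum_congr rfl fun l _ => ?_
      congr 1
    rw [hsum] at h1
    rw [← h1]
    have halt : altOn F H (k + q) (lastSet (k + q) (q - 1)) b = b := by
      apply altOn_apply_fixed
      intro σ hσ
      exact hB σ (permsOn_mono (lastSet_mono (by omega)) hσ)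
    have hcompl : (firstSet (k + q) (k + 1))ᶜ = lastSet (k + q) (q - 1) := by
      rw [compl_firstSet]; congr 1; omega
    refine mem_HmixSpan F H _ (firstSet_card hkn1) ⟨b, ?_⟩
    rw [LinearMap.comp_apply, hcompl, halt]
  · -- (ii)
    have hp : (⟨k - 1, by omega⟩ : Fin (k + q)) ∉ lastSet (k + q) q := by
      simp [mem_lastSet]
      omega
    have h1 := altOn_insert_apply F H (k + q) (lastSet (k + q) q) ⟨k - 1, by omega⟩ hp b hB
    have hins : insert (⟨k - 1, by omega⟩ : Fin (k + q)) (lastSet (k + q) q)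
        = lastSet (k + q) (q + 1) := by
      rw [lastSet_insert (show q < k + q by omega)]
      congr 1
      exact Fin.ext (by simp; omega)
    rw [lastSet_card hqn, hins] at h1
    have hsum : ∑ l ∈ lastSet (k + q) q,
        permMap F H (k + q) (Equiv.swap l ⟨k - 1, by omega⟩) b
        = ∑ m : Fin q,
            permMap F H (k + q)
              (Equiv.swap ⟨k - 1, by omega⟩ ⟨k + (m : ℕ), by have := m.isLt; omega⟩) b := by
      rw [lastSet_eq_map hqn, Finset.sum_map]
      refine Finset.sum_congr rfl fun m _ => ?_
      have he : (lastEmb (k + q) q hqn m)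
          = (⟨k + (m : ℕ), by have := m.isLt; omega⟩ : Fin (k + q)) := by
        refine Fin.ext ?_
        simp only [lastEmb, Function.Embedding.coeFn_mk]
        show k + q - q + (m : ℕ) = k + (m : ℕ)
        omega
      rw [he, Equiv.swap_comm]
    rw [hsum] at h1
    rw [← h1]
    have hsym : symOn F H (k + q) (firstSet (k + q) (k - 1))
        (altOn F H (k + q) (lastSet (k + q) (q + 1)) b)
        = altOn F H (k + q) (lastSet (k + q) (q + 1)) b := by
      apply symOn_apply_fixed
      intro σ hσ
      have hfix : ∀ i ∈ lastSet (k + q) (q + 1), σ i = i := by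
        intro i hi
        rw [mem_lastSet] at hi
        refine mem_permsOn.1 hσ i ?_
        rw [mem_firstSet]
        omega
      rw [permMap_altOn_conj, map_perm_self _ σ hfix,
        hA σ (permsOn_mono (firstSet_mono (by omega)) hσ)]
    have hcompl : (firstSet (k + q) (k - 1))ᶜ = lastSet (k + q) (q + 1) := by
      rw [compl_firstSet]; congr 1; omega
    refine mem_HmixSpan F H _ (firstSet_card (by omega)) ⟨b, ?_⟩
    rw [LinearMap.comp_apply, hcompl]
    exact hsym
  · -- (iii)
    intro l
    refine mem_HmixSpan F H _ ?_ (Hgen_perm F H _ _ hb)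
    rw [Finset.card_map, firstSet_card hkn]
  · -- (iv)
    intro m
    refine mem_HmixSpan F H _ ?_ (Hgen_perm F H _ _ hb)
    rw [Finset.card_map, firstSet_card hkn]

end
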